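/- The Gaussian binomial coefficient evaluated at q = −1 satisfies: [2n choose 2k+1]_{q=−1} = 0, and in all other cases [n choose k]_{q=−1} = C(⌊n/2⌋, ⌊k/2⌋). -/

import Mathlib

def inversions {n : ℕ} (w : Fin n → Bool) : ℕ :=
  (Finset.univ.filter
    (fun p : Fin n × Fin n => p.1 < p.2 ∧ w p.1 = true ∧ w p.2 = false)).card

def words (n k : ℕ) : Finset (Fin n → Bool) :=
  Finset.univ.filter (fun w => (Finset.univ.filter (fun i => w i = true)).card = k)

noncomputable def gaussBinom (n k : ℕ) : Polynomial ℤ :=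
  ∑ w ∈ words n k, Polynomial.X ^ inversions w

open Finset Polynomial

lemma trues_snoc (n : ℕ) (v : Fin n → Bool) (b : Bool) :
    (univ.filter (fun i : Fin (n+1) => (Fin.snoc v b : Fin (n+1) → Bool) i = true)).card
      = (univ.filter (fun i => v i = true)).card + (if b then 1 else 0) := by
  rw [Finset.card_filter, Finset.card_filter, Fin.sum_univ_castSucc]
  cases b <;> simp

lemma inversions_snoc (n : ℕ) (v : Fin n → Bool) (b : Bool) :
    inversions (Fin.snoc v b : Fin (n+1) → Bool)
      = inversions v + (if b then 0 else (univ.filter (fun i => v i = true)).card) := by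
  unfold inversions
  rw [Finset.card_filter, Finset.card_filter, Finset.card_filter,
    Fintype.sum_prod_type, Fin.sum_univ_castSucc]
  simp only [Fin.sum_univ_castSucc, Fin.snoc_castSucc, Fin.snoc_last,
    Fin.castSucc_lt_castSucc_iff, Fin.castSucc_lt_last, lt_irrefl]
  cases b <;>
  · rw [Fintype.sum_prod_type]
    simp [Fin.not_lt.mpr (Fin.le_last _), Finset.sum_add_distrib]

lemma snocEquiv_eq (n : ℕ) (b : Bool) (v : Fin n → Bool) :
    (Fin.snocEquiv (fun _ : Fin (n+1) => Bool)) (b, v) = Fin.snoc v b := rfl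

lemma gauss_succ (n k : ℕ) :
    gaussBinom (n+1) (k+1) = gaussBinom n k + X ^ (k+1) * gaussBinom n (k+1) := by
  unfold gaussBinom words
  rw [Finset.sum_filter, Finset.sum_filter, Finset.sum_filter,
    ← (Fin.snocEquiv (fun _ : Fin (n+1) => Bool)).sum_comp
      (fun w => if (univ.filter (fun i => w i = true)).card = k + 1 then
        (X : Polynomial ℤ) ^ inversions w else 0),
    Fintype.sum_prod_type, Fintype.sum_bool]
  simp only [snocEquiv_eq, trues_snoc, inversions_snoc]
  rw [Finset.mul_sum]
  congr 1
  · apply Finset.sum_congr rfl; intro y _; erw [trues_snoc]; simp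
  · apply Finset.sum_congr rfl; intro y _; erw [trues_snoc]
    by_cases h : (univ.filter (fun i => y i = true)).card = k + 1 <;>
      simp [h, pow_add, mul_comm]

lemma gauss_zero (n : ℕ) : gaussBinom n 0 = 1 := by
  unfold gaussBinom words
  have h : Finset.univ.filter
      (fun w : Fin n → Bool => (univ.filter (fun i => w i = true)).card = 0)
      = {fun _ => false} := by
    ext w
    simp [Finset.card_eq_zero, Finset.filter_eq_empty_iff, funext_iff]
  rw [h, Finset.sum_singleton]
  have h2 : inversions (fun _ : Fin n => false) = 0 := by
    unfold inversions; simp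
  simp [h2]

lemma gauss_of_lt {n k : ℕ} (h : n < k) : gaussBinom n k = 0 := by
  unfold gaussBinom words
  convert Finset.sum_empty
  rw [Finset.filter_eq_empty_iff]
  intro w _
  have := Finset.card_filter_le univ (fun i => w i = true)
  simp only [Finset.card_univ, Fintype.card_fin] at this
  omega

lemma gauss_eval (n k : ℕ) : (gaussBinom n k).eval (-1)
    = if Even n ∧ Odd k then 0 else ((n/2).choose (k/2) : ℤ) := by
  induction n generalizing k with
  | zero =>
    match k with
    | 0 => simp [gauss_zero]
    | k+1 =>
      rw [gauss_of_lt (by omega), eval_zero]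
      by_cases h : Odd (k+1)
      · simp [h]
      · rw [if_neg (by tauto)]
        rw [Nat.not_odd_iff_even, Nat.even_iff] at h
        rw [Nat.zero_div, Nat.choose_eq_zero_of_lt (by omega)]
        simp
  | succ n ih =>
    match k with
    | 0 =>
      simp [gauss_zero, Nat.not_odd_iff_even]
    | k+1 =>
      rw [gauss_succ, eval_add, eval_mul, eval_pow, eval_X, ih k, ih (k+1)]
      rcases Nat.even_or_odd n with ⟨m, rfl⟩ | ⟨m, rfl⟩ <;>
        rcases Nat.even_or_odd k with ⟨j, rfl⟩ | ⟨j, rfl⟩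
      · -- n = m+m, k = j+j
        rw [if_neg (by rintro ⟨h1, h2⟩; rw [Nat.odd_iff] at h2; omega),
          if_pos ⟨⟨m, rfl⟩, ⟨j, by omega⟩⟩,
          if_neg (by rintro ⟨h1, h2⟩; rw [Nat.even_iff] at h1; omega)]
        have hd1 : (m+m+1)/2 = m := by omega
        have hd2 : (j+j+1)/2 = j := by omega
        have hd3 : (m+m)/2 = m := by omega
        have hd4 : (j+j)/2 = j := by omega
        rw [hd1, hd2, hd3, hd4]
        ring
      · -- n = m+m, k = 2j+1
        rw [if_pos ⟨⟨m, rfl⟩, ⟨j, rfl⟩⟩,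
          if_neg (by rintro ⟨h1, h2⟩; rw [Nat.odd_iff] at h2; omega),
          if_neg (by rintro ⟨h1, h2⟩; rw [Nat.even_iff] at h1; omega)]
        have hd1 : (m+m+1)/2 = m := by omega
        have hd2 : (2*j+1+1)/2 = j+1 := by omega
        have hd3 : (m+m)/2 = m := by omega
        rw [hd1, hd2, hd3]
        have hs : (-1:ℤ)^(2*j+1+1) = 1 := Even.neg_one_pow ⟨j+1, by ring⟩
        rw [hs]; ring
      · -- n = 2m+1, k = j+j
        rw [if_neg (by rintro ⟨h1, h2⟩; rw [Nat.even_iff] at h1; omega),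
          if_neg (by rintro ⟨h1, h2⟩; rw [Nat.even_iff] at h1; omega),
          if_pos ⟨⟨m+1, by omega⟩, ⟨j, by omega⟩⟩]
        have hd1 : (2*m+1)/2 = m := by omega
        have hd2 : (j+j)/2 = j := by omega
        have hd3 : (j+j+1)/2 = j := by omega
        rw [hd1, hd2, hd3]
        have hs : (-1:ℤ)^(j+j+1) = -1 := Odd.neg_one_pow ⟨j, by ring⟩
        rw [hs]; ring
      · -- n = 2m+1, k = 2j+1
        rw [if_neg (by rintro ⟨h1, h2⟩; rw [Nat.even_iff] at h1; omega),
          if_neg (by rintro ⟨h1, h2⟩; rw [Nat.even_iff] at h1; omega),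
          if_neg (by rintro ⟨h1, h2⟩; rw [Nat.odd_iff] at h2; omega)]
        have hd1 : (2*m+1+1)/2 = m+1 := by omega
        have hd2 : (2*j+1+1)/2 = j+1 := by omega
        have hd3 : (2*m+1)/2 = m := by omega
        have hd4 : (2*j+1)/2 = j := by omega
        rw [hd1, hd2, hd3, hd4]
        have hs : (-1:ℤ)^(2*j+1+1) = 1 := Even.neg_one_pow ⟨j+1, by ring⟩
        rw [hs, Nat.choose_succ_succ]
        push_cast; ring

theorem stmt_17 :
    (∀ n k : ℕ, (gaussBinom (2 * n) (2 * k + 1)).eval (-1) = 0) ∧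
    (∀ n k : ℕ, Odd n ∨ Even k →
      (gaussBinom n k).eval (-1) = ((n / 2).choose (k / 2) : ℤ)) := by
  constructor
  · intro n k
    rw [gauss_eval, if_pos ⟨⟨n, by ring⟩, ⟨k, rfl⟩⟩]
  · intro n k h
    rw [gauss_eval, if_neg]
    rintro ⟨h1, h2⟩
    rcases h with h | h
    · exact (Nat.not_even_iff_odd.mpr h) h1
    · exact (Nat.not_odd_iff_even.mpr h) h2
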